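/- Let f : ℝ^p → ℝ be twice continuously differentiable with L-Lipschitz Hessian, and let g : ℝ^p → ℝ^p satisfy ‖g(φ) − ∇f(φ)‖₂ ≤ ε for all φ ∈ ℝ^p. Then for every θ, v ∈ ℝ^p and every δ > 0, the finite-difference Hessian–vector product h_v(θ) = (g(θ + δv) − g(θ))/δ satisfies ‖h_v(θ) − ∇²f(θ) v‖₂ ≤ 2ε/δ + (L/2)·δ·‖v‖₂². -/

import Mathlib

open scoped RealInnerProductSpace

/-- The Hessian of `f`, as the Fréchet derivative of the gradient. -/
noncomputable def hessianOf {p : ℕ} (f : EuclideanSpace ℝ (Fin p) → ℝ)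
    (θ : EuclideanSpace ℝ (Fin p)) :
    EuclideanSpace ℝ (Fin p) →L[ℝ] EuclideanSpace ℝ (Fin p) :=
  fderiv ℝ (gradient f) θ

set_option maxHeartbeats 1000000 in
theorem taylor_grad {p : ℕ}
    (f : EuclideanSpace ℝ (Fin p) → ℝ) (hf : ContDiff ℝ 2 f)
    (L : ℝ) (hL : 0 ≤ L)
    (hlip : ∀ θ₁ θ₂ : EuclideanSpace ℝ (Fin p),
      ‖hessianOf f θ₁ - hessianOf f θ₂‖ ≤ L * ‖θ₁ - θ₂‖)
    (θ w : EuclideanSpace ℝ (Fin p)) :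
    ‖gradient f (θ + w) - gradient f θ - hessianOf f θ w‖ ≤ L / 2 * ‖w‖ ^ 2 := by
  have hG : ContDiff ℝ 1 (gradient f) := by
    have h1 : ContDiff ℝ 1 (fderiv ℝ f) := hf.fderiv_right (by norm_num)
    exact ((InnerProductSpace.toDual ℝ
      (EuclideanSpace ℝ (Fin p))).symm.toLinearIsometry.toContinuousLinearMap.contDiff).comp h1
  have hH : ∀ x, HasFDerivAt (gradient f) (hessianOf f x) x := fun x =>
    ((hG.differentiable (by norm_num)) x).hasFDerivAt
  set F : ℝ → EuclideanSpace ℝ (Fin p) :=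
    fun t => gradient f (θ + t • w) - t • hessianOf f θ w with hF
  have hder : ∀ t : ℝ, HasDerivAt F (hessianOf f (θ + t • w) w - hessianOf f θ w) t := by
    intro t
    have h1 : HasDerivAt (fun t : ℝ => θ + t • w) w t := by
      simpa using ((hasDerivAt_id t).smul_const w).const_add θ
    have h2 : HasDerivAt (fun t : ℝ => gradient f (θ + t • w))
        (hessianOf f (θ + t • w) w) t := by
      exact (hH (θ + t • w)).comp_hasDerivAt t h1
    have h3 : HasDerivAt (fun t : ℝ => t • hessianOf f θ w) (hessianOf f θ w) t := by
      simpa using (hasDerivAt_id t).smul_const (hessianOf f θ w)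
    exact h2.sub h3
  have hHcont : Continuous fun t : ℝ => hessianOf f (θ + t • w) w - hessianOf f θ w := by
    have hc : Continuous fun t : ℝ => θ + t • w :=
      continuous_const.add (continuous_id.smul continuous_const)
    have hH' : Continuous fun x : EuclideanSpace ℝ (Fin p) => hessianOf f x w := by
      have h0 : Continuous fun x => fderiv ℝ (gradient f) x :=
        (hG.fderiv_right (m := 0) (by norm_num)).continuous
      exact (ContinuousLinearMap.apply ℝ (EuclideanSpace ℝ (Fin p)) w).continuous.comp h0
    exact (hH'.comp hc).sub continuous_const
  have hint : F 1 - F 0 = ∫ t in (0:ℝ)..1,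
      (hessianOf f (θ + t • w) w - hessianOf f θ w) :=
    (intervalIntegral.integral_eq_sub_of_hasDerivAt (fun t _ => hder t)
      (hHcont.intervalIntegrable 0 1)).symm
  have hbound : ∀ t ∈ Set.Icc (0:ℝ) 1,
      ‖hessianOf f (θ + t • w) w - hessianOf f θ w‖ ≤ L * t * ‖w‖ ^ 2 := by
    intro t ht
    have h1 : ‖hessianOf f (θ + t • w) w - hessianOf f θ w‖
        ≤ ‖hessianOf f (θ + t • w) - hessianOf f θ‖ * ‖w‖ := by
      rw [← ContinuousLinearMap.sub_apply]
      exact (hessianOf f (θ + t • w) - hessianOf f θ).le_opNorm w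
    have h2 := mul_le_mul_of_nonneg_right (hlip (θ + t • w) θ) (norm_nonneg w)
    have h3 : ‖(θ + t • w) - θ‖ = t * ‖w‖ := by
      rw [add_sub_cancel_left, norm_smul, Real.norm_eq_abs, abs_of_nonneg ht.1]
    calc ‖hessianOf f (θ + t • w) w - hessianOf f θ w‖
        ≤ L * ‖(θ + t • w) - θ‖ * ‖w‖ := le_trans h1 h2
      _ = L * t * ‖w‖ ^ 2 := by rw [h3]; ring
  have key : ‖F 1 - F 0‖ ≤ L / 2 * ‖w‖ ^ 2 := by
    rw [hint]
    have h1 : ‖∫ t in (0:ℝ)..1, (hessianOf f (θ + t • w) w - hessianOf f θ w)‖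
        ≤ |∫ t in (0:ℝ)..1, L * t * ‖w‖ ^ 2| := by
      apply intervalIntegral.norm_integral_le_abs_of_norm_le
      · rw [Set.uIoc_of_le (by norm_num : (0:ℝ) ≤ 1)]
        refine (MeasureTheory.ae_restrict_iff' measurableSet_Ioc).mpr
          (Filter.Eventually.of_forall fun t ht => ?_)
        exact hbound t ⟨le_of_lt ht.1, ht.2⟩
      · apply Continuous.intervalIntegrable
        exact (continuous_const.mul continuous_id).mul continuous_const
    have h2 : (∫ t in (0:ℝ)..1, L * t * ‖w‖ ^ 2) = L / 2 * ‖w‖ ^ 2 := by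
      have : (∫ t in (0:ℝ)..1, L * t * ‖w‖ ^ 2)
          = (L * ‖w‖ ^ 2) * ∫ t in (0:ℝ)..1, t := by
        rw [← intervalIntegral.integral_const_mul]
        congr 1; funext t; ring
      rw [this, integral_id]; ring
    have h2' : |∫ t in (0:ℝ)..1, L * t * ‖w‖ ^ 2| = L / 2 * ‖w‖ ^ 2 := by
      rw [h2, abs_of_nonneg (by positivity)]
    linarith [h1, h2'.le, h2'.ge]
  have hFeq : F 1 - F 0 = gradient f (θ + w) - gradient f θ - hessianOf f θ w := by
    simp [hF]
    abel
  rwa [hFeq] at key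

/-- error bound for finite-difference Hessian–vector products computed
from an `ε`-accurate gradient oracle. -/
theorem finite_difference_hessian_vector_product {p : ℕ}
    (f : EuclideanSpace ℝ (Fin p) → ℝ) (hf : ContDiff ℝ 2 f)
    (L : ℝ) (hL : 0 < L)
    (hlip : ∀ θ₁ θ₂ : EuclideanSpace ℝ (Fin p),
      ‖hessianOf f θ₁ - hessianOf f θ₂‖ ≤ L * ‖θ₁ - θ₂‖)
    (g : EuclideanSpace ℝ (Fin p) → EuclideanSpace ℝ (Fin p)) (ε : ℝ)
    (hg : ∀ φ : EuclideanSpace ℝ (Fin p), ‖g φ - gradient f φ‖ ≤ ε) :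
    ∀ (θ v : EuclideanSpace ℝ (Fin p)) (δ : ℝ), 0 < δ →
      ‖δ⁻¹ • (g (θ + δ • v) - g θ) - hessianOf f θ v‖
        ≤ 2 * ε / δ + L / 2 * δ * ‖v‖ ^ 2 := by
  intro θ v δ hδ
  have ht := taylor_grad f hf L hL.le hlip θ (δ • v)
  have hsm : hessianOf f θ (δ • v) = δ • hessianOf f θ v := by
    simp
  have hrw : δ⁻¹ • (g (θ + δ • v) - g θ) - hessianOf f θ v
      = δ⁻¹ • ((g (θ + δ • v) - gradient f (θ + δ • v)) - (g θ - gradient f θ)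
          + (gradient f (θ + δ • v) - gradient f θ - hessianOf f θ (δ • v))) := by
    rw [hsm]
    match_scalars <;> field_simp <;> ring
  rw [hrw]
  have h1 : ‖(g (θ + δ • v) - gradient f (θ + δ • v)) - (g θ - gradient f θ)
      + (gradient f (θ + δ • v) - gradient f θ - hessianOf f θ (δ • v))‖
      ≤ ε + ε + L / 2 * (δ * ‖v‖) ^ 2 := by
    have := norm_add_le ((g (θ + δ • v) - gradient f (θ + δ • v)) - (g θ - gradient f θ))
      (gradient f (θ + δ • v) - gradient f θ - hessianOf f θ (δ • v))
    have h2 := norm_sub_le (g (θ + δ • v) - gradient f (θ + δ • v)) (g θ - gradient f θ)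
    have h3 : ‖δ • v‖ = δ * ‖v‖ := by
      rw [norm_smul, Real.norm_eq_abs, abs_of_pos hδ]
    have h4 := ht
    rw [h3] at h4
    have := this.trans (by linarith [hg (θ + δ • v), hg θ] :
      ‖(g (θ + δ • v) - gradient f (θ + δ • v)) - (g θ - gradient f θ)‖
        + ‖gradient f (θ + δ • v) - gradient f θ - hessianOf f θ (δ • v)‖
        ≤ ε + ε + L / 2 * (δ * ‖v‖) ^ 2)
    exact this
  rw [norm_smul, Real.norm_eq_abs, abs_of_pos (inv_pos.mpr hδ)]
  have := mul_le_mul_of_nonneg_left h1 (le_of_lt (inv_pos.mpr hδ))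
  calc δ⁻¹ * ‖_‖ ≤ δ⁻¹ * (ε + ε + L / 2 * (δ * ‖v‖) ^ 2) := this
    _ = 2 * ε / δ + L / 2 * δ * ‖v‖ ^ 2 := by field_simp; ring
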